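/- arXiv:1808.04664 — 2 statements merged into one kernel-verified Lean document; each statement's English description precedes it below -/
import Mathlib

section
/- If Γ is a finite simplicial graph in the pincushion class 𝒢^(∞) and v₀ is a pin of Γ, then the induced subgraph of Γ on the vertex set VΓ \ {v₀} (equivalently, the graph with vertices VΓ \ {v₀} and edges EΓ \ {(v₀,v₁)}, where v₁ is the unique neighbor of v₀) again belongs to 𝒢^(∞). -/
namespace PincushionPaper

/-- Disjoint union of two simplicial graphs. -/
def disjUnion {V W : Type} (G : SimpleGraph V) (H : SimpleGraph W) :
    SimpleGraph (V ⊕ W) where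
  Adj x y :=
    match x, y with
    | Sum.inl a, Sum.inl b => G.Adj a b
    | Sum.inr a, Sum.inr b => H.Adj a b
    | _, _ => False
  symm := ⟨by
    rintro (a | a) (b | b) h
    · exact G.adj_symm h
    · exact h.elim
    · exact h.elim
    · exact H.adj_symm h⟩
  loopless := ⟨by
    rintro (a | a) h
    · exact G.irrefl h
    · exact H.irrefl h⟩

/-- The pinning `Φ_{(G,v)}(H)` of `H` to `G` at the vertex `v` of `G`:
vertex set `V ⊔ W`, edges those of `G` and `H` together with an edge
from every vertex of `H` to `v`. -/
def pinning {V W : Type} (G : SimpleGraph V) (v : V) (H : SimpleGraph W) :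
    SimpleGraph (V ⊕ W) where
  Adj x y :=
    match x, y with
    | Sum.inl a, Sum.inl b => G.Adj a b
    | Sum.inr a, Sum.inr b => H.Adj a b
    | Sum.inl a, Sum.inr _ => a = v
    | Sum.inr _, Sum.inl b => b = v
  symm := ⟨by
    rintro (a | a) (b | b) h
    · exact G.adj_symm h
    · exact h
    · exact h
    · exact H.adj_symm h⟩
  loopless := ⟨by
    rintro (a | a) h
    · exact G.irrefl h
    · exact H.irrefl h⟩

/-- Graphs obtained from the empty graph by repeatedly appending a graph
satisfying `P`, each appended graph being either placed as a disjoint union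
with the graph built so far, or pinned to the graph built so far at one of
its vertices; the resulting class is closed under graph isomorphism. -/
inductive BuiltFrom (P : ∀ V : Type, SimpleGraph V → Prop) :
    ∀ V : Type, SimpleGraph V → Prop
  | empty : BuiltFrom P Empty ⊥
  | disj {V W : Type} {G : SimpleGraph V} {H : SimpleGraph W} :
      BuiltFrom P V G → P W H → BuiltFrom P (V ⊕ W) (disjUnion G H)
  | pin {V W : Type} {G : SimpleGraph V} {H : SimpleGraph W} (v : V) :
      BuiltFrom P V G → P W H → BuiltFrom P (V ⊕ W) (pinning G v H)
  | iso {V W : Type} {G : SimpleGraph V} {H : SimpleGraph W} :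
      BuiltFrom P V G → (G ≃g H) → BuiltFrom P W H

/-- The classes `𝒢^(m)`: `𝒢^(0)` consists of the one-vertex graph only
(up to isomorphism), and `𝒢^(m+1)` consists of the graphs built from
graphs in `𝒢^(m)` by disjoint unions and pinnings. -/
def GClass : ℕ → ∀ V : Type, SimpleGraph V → Prop
  | 0 => fun _ G => Nonempty (G ≃g (⊥ : SimpleGraph Unit))
  | m + 1 => BuiltFrom (GClass m)

/-- The pincushion class `𝒢^(∞) = ⋃ₘ 𝒢^(m)`. -/
def Pincushion (V : Type) (G : SimpleGraph V) : Prop := ∃ m, GClass m V G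

/-- A pin of a graph: a vertex adjacent to exactly one other vertex. -/
def IsPin {V : Type} (G : SimpleGraph V) (v : V) : Prop := ∃! w, G.Adj v w

end PincushionPaper

open PincushionPaper

namespace PincushionPaper

lemma gclass_iso : ∀ (m : ℕ) {V W : Type} {G : SimpleGraph V} {H : SimpleGraph W},
    GClass m V G → (G ≃g H) → GClass m W H
  | 0, _, _, _, _, ⟨e⟩, f => ⟨f.symm.trans e⟩
  | _+1, _, _, _, _, h, f => BuiltFrom.iso h f

lemma pincushion_iso {V W : Type} {G : SimpleGraph V} {H : SimpleGraph W}
    (h : Pincushion V G) (f : G ≃g H) : Pincushion W H := by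
  obtain ⟨m, hm⟩ := h
  exact ⟨m, gclass_iso m hm f⟩

lemma builtFrom_mono {P Q : ∀ V : Type, SimpleGraph V → Prop}
    (hPQ : ∀ V G, P V G → Q V G) :
    ∀ {V : Type} {G : SimpleGraph V}, BuiltFrom P V G → BuiltFrom Q V G := by
  intro V G h
  induction h with
  | empty => exact .empty
  | disj _ hH ih => exact .disj ih (hPQ _ _ hH)
  | pin v _ hH ih => exact .pin v ih (hPQ _ _ hH)
  | iso _ e ih => exact .iso ih e

/-- `(Empty ⊕ V) ⊕ W ≃ V ⊕ W`. -/
def eqE {V W : Type} : ((Empty ⊕ V) ⊕ W) ≃ (V ⊕ W) where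
  toFun x := match x with
    | Sum.inl (Sum.inl e) => e.elim
    | Sum.inl (Sum.inr b) => Sum.inl b
    | Sum.inr w => Sum.inr w
  invFun y := match y with
    | Sum.inl b => Sum.inl (Sum.inr b)
    | Sum.inr w => Sum.inr w
  left_inv := by rintro ((e | b) | w)
                 · exact e.elim
                 · rfl
                 · rfl
  right_inv := by rintro (b | w) <;> rfl

lemma gclass_succ : ∀ (m : ℕ) {V : Type} {G : SimpleGraph V},
    GClass m V G → GClass (m+1) V G := by
  intro m
  induction m with
  | zero =>
    intro V G h
    obtain ⟨e⟩ := h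
    refine BuiltFrom.iso (BuiltFrom.disj BuiltFrom.empty ⟨RelIso.refl _⟩) ?_
    refine ⟨{ toFun := fun x => match x with
                | Sum.inl ε => ε.elim
                | Sum.inr u => e.toEquiv.symm u
              invFun := fun v => Sum.inr (e.toEquiv v)
              left_inv := by
                rintro (ε | u)
                · exact ε.elim
                · simp
              right_inv := fun v => e.toEquiv.symm_apply_apply v }, ?_⟩
    rintro (ε | u) (ε' | u')
    · exact ε.elim
    · exact ε.elim
    · exact ε'.elim
    · constructor
      · intro h
        exact (e.map_rel_iff.mpr h).elim
      · intro h
        exact h.elim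
  | succ m ih =>
    intro V G h
    exact builtFrom_mono (fun _ _ => ih) h

lemma gclass_mono {m n : ℕ} (hmn : m ≤ n) {V : Type} {G : SimpleGraph V}
    (h : GClass m V G) : GClass n V G := by
  induction n with
  | zero => obtain rfl := Nat.le_zero.mp hmn; exact h
  | succ n ih =>
    rcases Nat.lt_or_ge m (n+1) with h' | h'
    · exact gclass_succ n (ih (Nat.lt_succ_iff.mp h'))
    · have : m = n + 1 := le_antisymm hmn h'
      subst this; exact h

lemma pincushion_disjUnion {V W : Type} {G : SimpleGraph V} {H : SimpleGraph W}
    (hG : Pincushion V G) (hH : Pincushion W H) :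
    Pincushion (V ⊕ W) (disjUnion G H) := by
  obtain ⟨j, hj⟩ := hG
  obtain ⟨k, hk⟩ := hH
  refine ⟨max j k + 1, BuiltFrom.iso
    (BuiltFrom.disj (BuiltFrom.disj BuiltFrom.empty
      (gclass_mono (le_max_left j k) hj)) (gclass_mono (le_max_right j k) hk)) ?_⟩
  refine ⟨eqE, ?_⟩
  rintro ((ε | b) | w) ((ε' | b') | w') <;>
    first
      | exact ε.elim
      | exact ε'.elim
      | exact Iff.rfl

lemma pincushion_pinning {V W : Type} {G : SimpleGraph V} {H : SimpleGraph W}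
    (hG : Pincushion V G) (hH : Pincushion W H) (v : V) :
    Pincushion (V ⊕ W) (pinning G v H) := by
  obtain ⟨j, hj⟩ := hG
  obtain ⟨k, hk⟩ := hH
  refine ⟨max j k + 1, BuiltFrom.iso
    (BuiltFrom.pin (Sum.inr v) (BuiltFrom.disj BuiltFrom.empty
      (gclass_mono (le_max_left j k) hj)) (gclass_mono (le_max_right j k) hk)) ?_⟩
  refine ⟨eqE, ?_⟩
  rintro ((ε | b) | w) ((ε' | b') | w') <;>
    first
      | exact ε.elim
      | exact ε'.elim
      | exact Iff.rfl
      | exact ⟨congrArg Sum.inr, Sum.inr.inj⟩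

lemma pincushion_of_isEmpty {V : Type} [IsEmpty V] (G : SimpleGraph V) :
    Pincushion V G :=
  ⟨1, BuiltFrom.iso BuiltFrom.empty
    ⟨Equiv.equivOfIsEmpty Empty V, fun {a} => isEmptyElim a⟩⟩

/-- `{x : V ⊕ W // x ≠ inl a} ≃ {b : V // b ≠ a} ⊕ W`. -/
def eqL {V W : Type} (a : V) :
    ↥{x : V ⊕ W | x ≠ Sum.inl a} ≃ (↥{b : V | b ≠ a} ⊕ W) where
  toFun x := match x with
    | ⟨Sum.inl b, h⟩ => Sum.inl ⟨b, fun hb => h (by rw [hb])⟩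
    | ⟨Sum.inr w, _⟩ => Sum.inr w
  invFun y := match y with
    | Sum.inl ⟨b, hb⟩ => ⟨Sum.inl b, fun h => hb (Sum.inl.inj h)⟩
    | Sum.inr w => ⟨Sum.inr w, fun h => Sum.inr_ne_inl h⟩
  left_inv := by rintro ⟨(b | w), h⟩ <;> rfl
  right_inv := by rintro (⟨b, hb⟩ | w) <;> rfl

/-- `{x : V ⊕ W // x ≠ inr w₀} ≃ V ⊕ {w : W // w ≠ w₀}`. -/
def eqR {V W : Type} (w₀ : W) :
    ↥{x : V ⊕ W | x ≠ Sum.inr w₀} ≃ (V ⊕ ↥{w : W | w ≠ w₀}) where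
  toFun x := match x with
    | ⟨Sum.inl b, _⟩ => Sum.inl b
    | ⟨Sum.inr w, h⟩ => Sum.inr ⟨w, fun hw => h (by rw [hw])⟩
  invFun y := match y with
    | Sum.inl b => ⟨Sum.inl b, fun h => Sum.inl_ne_inr h⟩
    | Sum.inr ⟨w, hw⟩ => ⟨Sum.inr w, fun h => hw (Sum.inr.inj h)⟩
  left_inv := by rintro ⟨(b | w), h⟩ <;> rfl
  right_inv := by rintro (b | ⟨w, hw⟩) <;> rfl

def isoDisjL {V W : Type} (A : SimpleGraph V) (H : SimpleGraph W) (a : V) :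
    disjUnion (A.induce {b : V | b ≠ a}) H ≃g
      (disjUnion A H).induce {x : V ⊕ W | x ≠ Sum.inl a} := by
  refine ⟨(eqL a).symm, ?_⟩
  rintro (⟨b, hb⟩ | w) (⟨c, hc⟩ | w') <;> exact Iff.rfl

def isoDisjR {V W : Type} (A : SimpleGraph V) (H : SimpleGraph W) (w₀ : W) :
    disjUnion A (H.induce {w : W | w ≠ w₀}) ≃g
      (disjUnion A H).induce {x : V ⊕ W | x ≠ Sum.inr w₀} := by
  refine ⟨(eqR w₀).symm, ?_⟩
  rintro (b | ⟨w, hw⟩) (c | ⟨w', hw'⟩) <;> exact Iff.rfl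

def isoPinCenter {V W : Type} (A : SimpleGraph V) (H : SimpleGraph W) (v : V) :
    disjUnion (A.induce {b : V | b ≠ v}) H ≃g
      (pinning A v H).induce {x : V ⊕ W | x ≠ Sum.inl v} := by
  refine ⟨(eqL v).symm, ?_⟩
  rintro (⟨b, hb⟩ | w) (⟨c, hc⟩ | w')
  · exact Iff.rfl
  · exact ⟨fun h => (hb h).elim, fun h => h.elim⟩
  · exact ⟨fun h => (hc h).elim, fun h => h.elim⟩
  · exact Iff.rfl

def isoPinL {V W : Type} (A : SimpleGraph V) (H : SimpleGraph W) (v : V) (a : V)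
    (hva : v ≠ a) :
    pinning (A.induce {b : V | b ≠ a}) ⟨v, hva⟩ H ≃g
      (pinning A v H).induce {x : V ⊕ W | x ≠ Sum.inl a} := by
  refine ⟨(eqL a).symm, ?_⟩
  rintro (⟨b, hb⟩ | w) (⟨c, hc⟩ | w')
  · exact Iff.rfl
  · exact ⟨fun h => Subtype.ext h, fun h => congrArg Subtype.val h⟩
  · exact ⟨fun h => Subtype.ext h, fun h => congrArg Subtype.val h⟩
  · exact Iff.rfl

def isoPinR {V W : Type} (A : SimpleGraph V) (H : SimpleGraph W) (v : V) (w₀ : W) :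
    pinning A v (H.induce {w : W | w ≠ w₀}) ≃g
      (pinning A v H).induce {x : V ⊕ W | x ≠ Sum.inr w₀} := by
  refine ⟨(eqR w₀).symm, ?_⟩
  rintro (b | ⟨w, hw⟩) (c | ⟨w', hw'⟩) <;> exact Iff.rfl

lemma remove_aux : ∀ (m : ℕ) {V : Type} (G : SimpleGraph V), GClass m V G →
    ∀ v₀ : V, (∀ w w', G.Adj v₀ w → G.Adj v₀ w' → w = w') →
    Pincushion {v : V | v ≠ v₀} (G.induce {v : V | v ≠ v₀}) := by
  intro m
  induction m with
  | zero =>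
    intro V G h v₀ _
    obtain ⟨e⟩ := h
    have : IsEmpty ↥{v : V | v ≠ v₀} :=
      ⟨fun ⟨v, hv⟩ => hv (e.toEquiv.injective (Subsingleton.elim _ _))⟩
    exact pincushion_of_isEmpty _
  | succ m ihm =>
    intro V G h
    induction h with
    | empty => intro v₀ _; exact isEmptyElim v₀
    | @disj V W A H hA hH ihA =>
      rintro (a | w) hc
      · have hc' : ∀ b b', A.Adj a b → A.Adj a b' → b = b' := fun b b' h1 h2 =>
          Sum.inl.inj (hc (Sum.inl b) (Sum.inl b') h1 h2)
        exact pincushion_iso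
          (pincushion_disjUnion (ihA a hc') ⟨m, hH⟩) (isoDisjL A H a)
      · have hc' : ∀ x x', H.Adj w x → H.Adj w x' → x = x' := fun x x' h1 h2 =>
          Sum.inr.inj (hc (Sum.inr x) (Sum.inr x') h1 h2)
        exact pincushion_iso
          (pincushion_disjUnion ⟨m + 1, hA⟩ (ihm H hH w hc')) (isoDisjR A H w)
    | @pin V W A H v hA hH ihA =>
      rintro (a | w) hc
      · by_cases hav : a = v
        · subst hav
          have hc' : ∀ b b', A.Adj a b → A.Adj a b' → b = b' := fun b b' h1 h2 =>
            Sum.inl.inj (hc (Sum.inl b) (Sum.inl b') h1 h2)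
          exact pincushion_iso
            (pincushion_disjUnion (ihA a hc') ⟨m, hH⟩) (isoPinCenter A H a)
        · have hc' : ∀ b b', A.Adj a b → A.Adj a b' → b = b' := fun b b' h1 h2 =>
            Sum.inl.inj (hc (Sum.inl b) (Sum.inl b') h1 h2)
          exact pincushion_iso
            (pincushion_pinning (ihA a hc') ⟨m, hH⟩ ⟨v, Ne.symm hav⟩)
            (isoPinL A H v a (Ne.symm hav))
      · have hc' : ∀ x x', H.Adj w x → H.Adj w x' → x = x' := by
          intro x x' h1 _
          exact absurd (hc (Sum.inl v) (Sum.inr x) rfl h1) (fun h => Sum.inl_ne_inr h)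
        exact pincushion_iso
          (pincushion_pinning ⟨m + 1, hA⟩ (ihm H hH w hc') v) (isoPinR A H v w)
    | @iso V W A B hA e ihA =>
      intro v₀ hc
      have hc' : ∀ b b', A.Adj (e.symm v₀) b → A.Adj (e.symm v₀) b' → b = b' := by
        intro b b' h1 h2
        have h1' : B.Adj v₀ (e b) := by
          have := e.map_rel_iff.mpr h1
          rwa [e.apply_symm_apply] at this
        have h2' : B.Adj v₀ (e b') := by
          have := e.map_rel_iff.mpr h2
          rwa [e.apply_symm_apply] at this
        exact e.toEquiv.injective (hc _ _ h1' h2')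
      refine pincushion_iso (ihA (e.symm v₀) hc') ⟨?_, ?_⟩
      · refine Equiv.subtypeEquiv e.toEquiv (fun a => ?_)
        simp only [Set.mem_setOf_eq, not_iff_not]
        exact e.toEquiv.eq_symm_apply
      · rintro ⟨x, hx⟩ ⟨y, hy⟩
        exact e.map_rel_iff

end PincushionPaper

/-- If `G ∈ 𝒢^(∞)` and `v₀` is a pin of `G`, then the induced subgraph of
`G` on `V \ {v₀}` again belongs to `𝒢^(∞)`. -/
theorem pincushion_remove_pin {V : Type} [Fintype V] (G : SimpleGraph V)
    (hG : Pincushion V G) (v₀ : V) (hv₀ : IsPin G v₀) :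
    Pincushion {v : V | v ≠ v₀} (G.induce {v : V | v ≠ v₀}) := by
  obtain ⟨m, hm⟩ := hG
  obtain ⟨w, hw, hu⟩ := hv₀
  exact PincushionPaper.remove_aux m G hm v₀
    (fun a b h1 h2 => (hu a h1).trans (hu b h2).symm)
end

section
/- If Γ is a connected finite simplicial graph in the pincushion class 𝒢^(∞) with more than one vertex and with no pins, then Γ is isomorphic to a pinning Φ_{(Γ',v₁)}(Γ₁) for some graphs Γ', Γ₁ ∈ 𝒢^(∞) with Γ₁ having more than one vertex and some vertex v₁ of Γ'. -/
open PincushionPaper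

section Aux

open SimpleGraph

/-- The conclusion predicate. -/
def Concl (V : Type) (G : SimpleGraph V) : Prop :=
  ∃ (V' W : Type) (G' : SimpleGraph V') (H : SimpleGraph W) (v₁ : V'),
    Pincushion V' G' ∧ Pincushion W H ∧ Nontrivial W ∧
      Nonempty (G ≃g pinning G' v₁ H)

lemma concl_iso {V W : Type} {G : SimpleGraph V} {H : SimpleGraph W} (e : G ≃g H) :
    Concl V G → Concl W H := by
  rintro ⟨V', W', G', H', v₁, h1, h2, h3, ⟨f⟩⟩
  exact ⟨V', W', G', H', v₁, h1, h2, h3, ⟨e.symm.trans f⟩⟩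

lemma nt_equiv {α β : Type} (e : α ≃ β) (h : Nontrivial α) : Nontrivial β := by
  obtain ⟨a, b, hab⟩ := h
  exact ⟨e a, e b, fun hh => hab (e.injective hh)⟩

lemma pin_iso {V W : Type} {G : SimpleGraph V} {H : SimpleGraph W} (e : G ≃g H) (v : V) :
    IsPin G v → IsPin H (e v) := by
  rintro ⟨w, hw, hu⟩
  refine ⟨e w, e.map_rel_iff.mpr hw, ?_⟩
  intro y hy
  have hy' : G.Adj v (e.symm y) := e.map_rel_iff.mp (by rwa [e.apply_symm_apply])
  have := hu _ hy'
  rw [← this, e.apply_symm_apply]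

lemma disj_walk_isLeft {V W : Type} {G : SimpleGraph V} {H : SimpleGraph W} :
    ∀ {x y : V ⊕ W}, (disjUnion G H).Walk x y → x.isLeft = y.isLeft := by
  intro x y p
  induction p with
  | nil => rfl
  | @cons a b c h _ ih =>
    refine Eq.trans ?_ ih
    rcases a with a | a <;> rcases b with b | b
    · rfl
    · exact h.elim
    · exact h.elim
    · rfl

/-- Iso forgetting an empty right summand. -/
def isoLeft {V W : Type} [IsEmpty W] {K : SimpleGraph (V ⊕ W)} {G : SimpleGraph V}
    (h : ∀ a b : V, K.Adj (Sum.inl a) (Sum.inl b) ↔ G.Adj a b) : K ≃g G where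
  toEquiv := Equiv.sumEmpty V W
  map_rel_iff' := by
    rintro (a | a) (b | b)
    · simpa [Equiv.sumEmpty] using (h a b).symm
    · exact isEmptyElim b
    · exact isEmptyElim a
    · exact isEmptyElim a

/-- Iso forgetting an empty left summand. -/
def isoRight {V W : Type} [IsEmpty V] {K : SimpleGraph (V ⊕ W)} {H : SimpleGraph W}
    (h : ∀ a b : W, K.Adj (Sum.inr a) (Sum.inr b) ↔ H.Adj a b) : K ≃g H where
  toEquiv := Equiv.emptySum V W
  map_rel_iff' := by
    rintro (a | a) (b | b)
    · exact isEmptyElim a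
    · exact isEmptyElim a
    · exact isEmptyElim b
    · simpa [Equiv.emptySum, Equiv.sumComm, Equiv.sumEmpty] using (h a b).symm

lemma singleton_pin {V W : Type} [Subsingleton W] {G : SimpleGraph V} {H : SimpleGraph W}
    (v : V) (w : W) : IsPin (pinning G v H) (Sum.inr w) := by
  refine ⟨Sum.inl v, rfl, ?_⟩
  rintro (b | b) hb
  · exact congrArg Sum.inl hb
  · exact absurd hb (by rw [Subsingleton.elim w b]; exact H.irrefl)

lemma main_aux : ∀ (m : ℕ) (V : Type) (G : SimpleGraph V), GClass m V G →
    G.Connected → Nontrivial V → (∀ v, ¬ IsPin G v) → Concl V G := by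
  intro m
  induction m with
  | zero =>
    intro V G h0 _ hnt _
    obtain ⟨e⟩ := h0
    obtain ⟨a, b, hab⟩ := hnt
    exact (hab (e.toEquiv.injective (Subsingleton.elim _ _))).elim
  | succ m IH =>
    intro V G h
    induction h with
    | empty =>
      rintro _ ⟨a, _, _⟩ _
      exact a.elim
    | @disj V' W' G' H' hG hH ihG =>
      intro hconn hnt hnopin
      rcases isEmpty_or_nonempty (α := V') with hV | hV
      · have e : disjUnion G' H' ≃g H' := isoRight (fun a b => Iff.rfl)
        refine concl_iso e.symm (IH W' H' hH ?_ ?_ ?_)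
        · exact e.connected_iff.mp hconn
        · exact nt_equiv e.toEquiv hnt
        · intro u hu
          exact hnopin (e.symm u) (pin_iso e.symm u hu)
      · rcases isEmpty_or_nonempty (α := W') with hW | hW
        · have e : disjUnion G' H' ≃g G' := isoLeft (fun a b => Iff.rfl)
          refine concl_iso e.symm (ihG ?_ ?_ ?_)
          · exact e.connected_iff.mp hconn
          · exact nt_equiv e.toEquiv hnt
          · intro u hu
            exact hnopin (e.symm u) (pin_iso e.symm u hu)
        · exfalso
          obtain ⟨a⟩ := hV
          obtain ⟨b⟩ := hW
          obtain ⟨p⟩ := hconn.preconnected (Sum.inl a) (Sum.inr b)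
          simpa using disj_walk_isLeft p
    | @pin V' W' G' H' v hG hH ihG =>
      intro hconn hnt hnopin
      rcases isEmpty_or_nonempty (α := W') with hW | hW
      · have e : pinning G' v H' ≃g G' := isoLeft (fun a b => Iff.rfl)
        refine concl_iso e.symm (ihG ?_ ?_ ?_)
        · exact e.connected_iff.mp hconn
        · exact nt_equiv e.toEquiv hnt
        · intro u hu
          exact hnopin (e.symm u) (pin_iso e.symm u hu)
      · rcases subsingleton_or_nontrivial W' with hsub | hnt'
        · exact absurd (singleton_pin v hW.some) (hnopin _)
        · exact ⟨V', W', G', H', v, ⟨m + 1, hG⟩, ⟨m, hH⟩, hnt',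
            ⟨SimpleGraph.Iso.refl⟩⟩
    | @iso V' W' G' H' hG e ihG =>
      intro hconn hnt hnopin
      refine concl_iso e (ihG ?_ ?_ ?_)
      · exact e.connected_iff.mpr hconn
      · exact nt_equiv e.symm.toEquiv hnt
      · intro u hu
        exact hnopin (e u) (pin_iso e u hu)

end Aux

/-- A connected pincushion graph with more than one vertex and no pins is
isomorphic to a pinning `Φ_{(Γ',v₁)}(Γ₁)` with `Γ', Γ₁ ∈ 𝒢^(∞)` and `Γ₁`
having more than one vertex. -/
theorem pincushion_no_pin_structure {V : Type} [Fintype V] (G : SimpleGraph V)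
    (hG : Pincushion V G) (hconn : G.Connected) (hcard : 1 < Fintype.card V)
    (hnopin : ∀ v : V, ¬ IsPin G v) :
    ∃ (V' W : Type) (G' : SimpleGraph V') (H : SimpleGraph W) (v₁ : V'),
      Pincushion V' G' ∧ Pincushion W H ∧ Nontrivial W ∧
        Nonempty (G ≃g pinning G' v₁ H) := by
  obtain ⟨m, hm⟩ := hG
  exact main_aux m V G hm hconn (Fintype.one_lt_card_iff_nontrivial.mp hcard) hnopin
end
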